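/- Let d ≥ 2, s ∈ (0,2), C > 0 and ε > 0, and let V : ℝ^d → ℝ be measurable with V(x) ≥ -C·‖x‖^{-s} for all x with 0 < ‖x‖ ≤ ε. Then there exists Ĉ > 0 such that for every λ ≥ 0, ∫_{B(0,ε)} (λ - V(x))₊^{d/2} dx ≤ Ĉ·(1 + λ^{d/2}); in particular this integral is finite. -/

import Mathlib

open MeasureTheory Metric Set
open scoped ENNReal

lemma two_rpow_bound {a b q : ℝ} (ha : 0 ≤ a) (hb : 0 ≤ b) (hq : 0 ≤ q) :
    (a + b) ^ q ≤ 2 ^ q * (a ^ q + b ^ q) := by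
  have hmax : a + b ≤ 2 * max a b := by
    rcases le_total a b with h | h
    · rw [max_eq_right h]; linarith
    · rw [max_eq_left h]; linarith
  have h0 : (0 : ℝ) ≤ max a b := le_max_of_le_left ha
  calc (a + b) ^ q ≤ (2 * max a b) ^ q := Real.rpow_le_rpow (by linarith) hmax hq
    _ = 2 ^ q * (max a b) ^ q := Real.mul_rpow (by norm_num) h0
    _ ≤ 2 ^ q * (a ^ q + b ^ q) := by
        apply mul_le_mul_of_nonneg_left _ (Real.rpow_nonneg (by norm_num) q)
        rcases le_total a b with h | h
        · rw [max_eq_right h]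
          exact le_add_of_nonneg_left (Real.rpow_nonneg ha q)
        · rw [max_eq_left h]
          exact le_add_of_nonneg_right (Real.rpow_nonneg hb q)

lemma integrableOn_norm_rpow_neg_ball (d : ℕ) (p ε : ℝ) (hp : 0 < p)
    (hpd : p < d) (hε : 0 < ε) :
    IntegrableOn (fun x : EuclideanSpace ℝ (Fin d) => ‖x‖ ^ (-p))
      (Metric.ball 0 ε) := by
  set E := EuclideanSpace ℝ (Fin d)
  have hmeas : Measurable fun x : EuclideanSpace ℝ (Fin d) => ‖x‖ ^ (-p) :=
    measurable_norm.pow measurable_const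
  refine ⟨hmeas.aestronglyMeasurable.restrict, ?_⟩
  rw [hasFiniteIntegral_iff_ofReal
    (ae_of_all _ fun x => Real.rpow_nonneg (norm_nonneg _) _)]
  set ν := volume.restrict (Metric.ball (0 : EuclideanSpace ℝ (Fin d)) ε) with hν
  rw [lintegral_eq_lintegral_meas_le ν
    (ae_of_all _ fun x => Real.rpow_nonneg (norm_nonneg _) _) hmeas.aemeasurable]
  have hsub : ∀ t : ℝ, 0 < t → {a : E | t ≤ ‖a‖ ^ (-p)} ⊆
      Metric.closedBall 0 (t ^ (-p)⁻¹) := by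
    intro t ht x hx
    simp only [mem_setOf_eq] at hx
    rcases eq_or_ne x 0 with rfl | hx0
    · exfalso
      rw [norm_zero, Real.zero_rpow (neg_ne_zero.mpr hp.ne')] at hx
      linarith
    · have hxn : 0 < ‖x‖ := norm_pos_iff.mpr hx0
      rw [Metric.mem_closedBall, dist_zero_right]
      exact (Real.le_rpow_inv_iff_of_neg hxn ht (by linarith : -p < 0)).mpr hx
  have hd' : Module.finrank ℝ E = d := finrank_euclideanSpace_fin
  calc ∫⁻ t in Ioi (0 : ℝ), ν {a : E | t ≤ ‖a‖ ^ (-p)}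
      ≤ ∫⁻ t in Ioc (0 : ℝ) 1 ∪ Ioi 1, ν {a : E | t ≤ ‖a‖ ^ (-p)} :=
        lintegral_mono_set Ioi_subset_Ioc_union_Ioi
    _ ≤ (∫⁻ t in Ioc (0 : ℝ) 1, ν {a : E | t ≤ ‖a‖ ^ (-p)}) +
        ∫⁻ t in Ioi (1 : ℝ), ν {a : E | t ≤ ‖a‖ ^ (-p)} := lintegral_union_le _ _ _
    _ < ∞ := by
        refine ENNReal.add_lt_top.2 ⟨?_, ?_⟩
        · calc (∫⁻ t in Ioc (0 : ℝ) 1, ν {a : E | t ≤ ‖a‖ ^ (-p)})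
              ≤ ∫⁻ _ in Ioc (0 : ℝ) 1, volume (Metric.ball (0 : EuclideanSpace ℝ (Fin d)) ε) := by
                refine lintegral_mono fun t => ?_
                calc ν {a : E | t ≤ ‖a‖ ^ (-p)} ≤ ν univ := measure_mono (subset_univ _)
                  _ = volume (Metric.ball (0 : EuclideanSpace ℝ (Fin d)) ε) := by
                      rw [hν, Measure.restrict_apply_univ]
            _ = volume (Metric.ball (0 : EuclideanSpace ℝ (Fin d)) ε) * volume (Ioc (0 : ℝ) 1) :=
                setLIntegral_const _ _
            _ < ∞ := ENNReal.mul_lt_top measure_ball_lt_top (by simp)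
        · have hlt : -((d : ℝ) / p) < -1 := by
            rw [neg_lt_neg_iff]
            rw [lt_div_iff₀ hp]
            linarith
          calc (∫⁻ t in Ioi (1 : ℝ), ν {a : E | t ≤ ‖a‖ ^ (-p)})
              ≤ ∫⁻ t in Ioi (1 : ℝ), ENNReal.ofReal (t ^ (-((d : ℝ) / p))) *
                  volume (Metric.ball (0 : EuclideanSpace ℝ (Fin d)) 1) := by
                refine setLIntegral_mono' measurableSet_Ioi fun t ht => ?_
                have ht0 : (0 : ℝ) < t := lt_trans one_pos ht
                have hr0 : (0 : ℝ) ≤ t ^ (-p)⁻¹ := Real.rpow_nonneg ht0.le _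
                calc ν {a : E | t ≤ ‖a‖ ^ (-p)}
                    ≤ volume (Metric.closedBall (0 : EuclideanSpace ℝ (Fin d)) (t ^ (-p)⁻¹)) :=
                      le_trans (Measure.restrict_le_self _) (measure_mono (hsub t ht0))
                  _ = ENNReal.ofReal ((t ^ (-p)⁻¹) ^ Module.finrank ℝ E) *
                      volume (Metric.ball (0 : EuclideanSpace ℝ (Fin d)) 1) :=
                      Measure.addHaar_closedBall _ _ hr0
                  _ = ENNReal.ofReal (t ^ (-((d : ℝ) / p))) *
                      volume (Metric.ball (0 : EuclideanSpace ℝ (Fin d)) 1) := by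
                      congr 1
                      rw [hd', ← Real.rpow_natCast (t ^ (-p)⁻¹) d,
                        ← Real.rpow_mul ht0.le]
                      congr 1
                      rw [inv_neg]; ring
            _ = (∫⁻ t in Ioi (1 : ℝ), ENNReal.ofReal (t ^ (-((d : ℝ) / p)))) *
                volume (Metric.ball (0 : EuclideanSpace ℝ (Fin d)) 1) :=
                lintegral_mul_const' _ _ measure_ball_lt_top.ne
            _ < ∞ := ENNReal.mul_lt_top
                ((integrableOn_Ioi_rpow_of_lt hlt one_pos).setLIntegral_lt_top)
                measure_ball_lt_top

/-- Section 4.3: a Coulomb-like singularity `-C r^{-s}`, `0 < s < 2`, contributes at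
most `Ĉ(1 + λ^{d/2})` to the Weyl integral over a small ball around the origin. -/
theorem stmt18 (d : ℕ) (hd : 2 ≤ d) (s C ε : ℝ) (hs : s ∈ Set.Ioo (0 : ℝ) 2)
    (hC : 0 < C) (hε : 0 < ε)
    (V : EuclideanSpace ℝ (Fin d) → ℝ) (hV : Measurable V)
    (hlow : ∀ x : EuclideanSpace ℝ (Fin d), 0 < ‖x‖ → ‖x‖ ≤ ε →
      V x ≥ -C * ‖x‖ ^ (-s)) :
    ∃ Chat > (0 : ℝ), ∀ lam ≥ (0 : ℝ),
      IntegrableOn (fun x => max (lam - V x) 0 ^ ((d : ℝ) / 2))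
        (Metric.ball (0 : EuclideanSpace ℝ (Fin d)) ε) ∧
      (∫ x in Metric.ball (0 : EuclideanSpace ℝ (Fin d)) ε,
          max (lam - V x) 0 ^ ((d : ℝ) / 2)) ≤ Chat * (1 + lam ^ ((d : ℝ) / 2)) := by
  obtain ⟨hs0, hs2⟩ := hs
  set q : ℝ := (d : ℝ) / 2 with hqdef
  have hdpos : (0 : ℝ) < d := by exact_mod_cast lt_of_lt_of_le (by norm_num) hd
  have hq0 : 0 < q := by positivity
  set p : ℝ := s * q with hpdef
  have hp : 0 < p := mul_pos hs0 hq0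
  have hpd : p < d := by
    have : s * q < 2 * q := by nlinarith
    calc p = s * q := rfl
      _ < 2 * q := this
      _ = d := by rw [hqdef]; ring
  have hI := integrableOn_norm_rpow_neg_ball d p ε hp hpd hε
  set I : ℝ := ∫ x in Metric.ball (0 : EuclideanSpace ℝ (Fin d)) ε, ‖x‖ ^ (-p) with hIdef
  have hInn : 0 ≤ I :=
    integral_nonneg fun x => Real.rpow_nonneg (norm_nonneg _) _
  set vol : ℝ := (volume (Metric.ball (0 : EuclideanSpace ℝ (Fin d)) ε)).toReal with hvdef
  have hvol : 0 ≤ vol := ENNReal.toReal_nonneg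
  have hCq : 0 < C ^ q := Real.rpow_pos_of_pos hC q
  refine ⟨2 ^ q * (vol + C ^ q * I + 1), by positivity, ?_⟩
  intro lam hlam
  set g : EuclideanSpace ℝ (Fin d) → ℝ := fun x => 2 ^ q * (lam ^ q + C ^ q * ‖x‖ ^ (-p)) with hgdef
  have hg_int : IntegrableOn g (Metric.ball (0 : EuclideanSpace ℝ (Fin d)) ε) := by
    apply Integrable.const_mul
    exact ((integrableOn_const measure_ball_lt_top.ne)).add (hI.const_mul _)
  have hfmeas : Measurable fun x : EuclideanSpace ℝ (Fin d) => max (lam - V x) 0 ^ q :=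
    ((measurable_const.sub hV).max measurable_const).pow measurable_const
  have h0 : volume ({0} : Set (EuclideanSpace ℝ (Fin d))) = 0 := by
    rw [← Metric.closedBall_zero, Measure.addHaar_closedBall _ _ le_rfl,
      finrank_euclideanSpace_fin, zero_pow (by omega : d ≠ 0), ENNReal.ofReal_zero, zero_mul]
  have hne : ∀ᵐ x : EuclideanSpace ℝ (Fin d)
      ∂volume.restrict (Metric.ball (0 : EuclideanSpace ℝ (Fin d)) ε), x ≠ 0 :=
    ae_restrict_of_ae (compl_mem_ae_iff.mpr h0)
  have hbound : ∀ᵐ x : EuclideanSpace ℝ (Fin d) ∂volume.restrict (Metric.ball (0 : EuclideanSpace ℝ (Fin d)) ε),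
      ‖max (lam - V x) 0 ^ q‖ ≤ g x := by
    filter_upwards [self_mem_ae_restrict measurableSet_ball, hne] with x hxball hx0
    have hxn : 0 < ‖x‖ := norm_pos_iff.mpr hx0
    have hxε : ‖x‖ ≤ ε := by
      rw [Metric.mem_ball, dist_zero_right] at hxball
      exact hxball.le
    have hVx : V x ≥ -C * ‖x‖ ^ (-s) := hlow x hxn hxε
    have hxs : 0 ≤ C * ‖x‖ ^ (-s) :=
      mul_nonneg hC.le (Real.rpow_nonneg (norm_nonneg _) _)
    have hmaxle : max (lam - V x) 0 ≤ lam + C * ‖x‖ ^ (-s) := by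
      refine max_le (by linarith) (by linarith)
    have hmaxnn : 0 ≤ max (lam - V x) 0 := le_max_right _ _
    rw [Real.norm_of_nonneg (Real.rpow_nonneg hmaxnn _)]
    calc max (lam - V x) 0 ^ q ≤ (lam + C * ‖x‖ ^ (-s)) ^ q :=
          Real.rpow_le_rpow hmaxnn hmaxle hq0.le
      _ ≤ 2 ^ q * (lam ^ q + (C * ‖x‖ ^ (-s)) ^ q) :=
          two_rpow_bound hlam hxs hq0.le
      _ = g x := by
          rw [hgdef]
          congr 2
          rw [Real.mul_rpow hC.le (Real.rpow_nonneg (norm_nonneg _) _),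
            ← Real.rpow_mul (norm_nonneg _)]
          congr 1
          rw [hpdef]; ring
  have hf_int : IntegrableOn (fun x : EuclideanSpace ℝ (Fin d) => max (lam - V x) 0 ^ q)
      (Metric.ball (0 : EuclideanSpace ℝ (Fin d)) ε) :=
    Integrable.mono' hg_int hfmeas.aestronglyMeasurable.restrict hbound
  refine ⟨hf_int, ?_⟩
  have hle : (∫ x in Metric.ball (0 : EuclideanSpace ℝ (Fin d)) ε, max (lam - V x) 0 ^ q) ≤
      ∫ x in Metric.ball (0 : EuclideanSpace ℝ (Fin d)) ε, g x := by
    refine integral_mono_ae hf_int hg_int ?_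
    filter_upwards [hbound] with x hx
    exact le_trans (le_abs_self _) hx
  have hgval : (∫ x in Metric.ball (0 : EuclideanSpace ℝ (Fin d)) ε, g x) =
      2 ^ q * (lam ^ q * vol + C ^ q * I) := by
    rw [hgdef]
    simp only
    rw [integral_const_mul]
    congr 1
    rw [integral_add (integrableOn_const (C := lam ^ q) measure_ball_lt_top.ne)
      (hI.const_mul _), integral_const_mul, setIntegral_const]
    simp [hvdef, hIdef, smul_eq_mul, mul_comm, measureReal_def]
  have hlamq : 0 ≤ lam ^ q := Real.rpow_nonneg hlam q
  have h2q : (0 : ℝ) < 2 ^ q := Real.rpow_pos_of_pos (by norm_num) q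
  calc (∫ x in Metric.ball (0 : EuclideanSpace ℝ (Fin d)) ε, max (lam - V x) 0 ^ q)
      ≤ 2 ^ q * (lam ^ q * vol + C ^ q * I) := hgval ▸ hle
    _ ≤ 2 ^ q * (vol + C ^ q * I + 1) * (1 + lam ^ q) := by
        rw [mul_assoc]
        refine mul_le_mul_of_nonneg_left ?_ h2q.le
        nlinarith [mul_nonneg (mul_nonneg hCq.le hInn) hlamq, mul_nonneg hvol hlamq]
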